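/- arXiv:2104.01739 — 4 statements merged into one kernel-verified Lean document; each statement's English description precedes it below -/
import Mathlib

section
/- If a finite simple graph G contains a cycle as a subgraph, then in(G) ≥ 3. -/
open SimpleGraph


namespace Inspection

variable {V : Type*} {W : Type*}

/-- The boundary of a vertex set `X`: vertices of `X` having a neighbor outside `X`. -/
def boundary (G : SimpleGraph V) (X : Set V) : Set V :=
  {v | v ∈ X ∧ ∃ w, w ∉ X ∧ G.Adj v w}

/-- The set of neighbors of a vertex set `X`. -/
def nbrSet (G : SimpleGraph V) (X : Set V) : Set V :=
  {v | ∃ u ∈ X, G.Adj u v}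

/-- The fully cleared sets of a search `S` (indexed so that turn `t ≥ 1` inspects `S t`):
`FC 0 = ∅`, and `FC (t+1) = PC (t+1) \ ∂(PC (t+1))` where `PC (t+1) = FC t ∪ S (t+1)`. -/
def FC (G : SimpleGraph V) (S : ℕ → Set V) : ℕ → Set V
  | 0 => ∅
  | t + 1 => (FC G S t ∪ S (t + 1)) \ boundary G (FC G S t ∪ S (t + 1))

/-- There is a successful `k`-search on `G`: a finite sequence `S 1, ..., S ℓ` of sets of
size at most `k` whose final fully cleared set is all of `V`. -/
def SuccessfulSearch (G : SimpleGraph V) (k : ℕ) : Prop :=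
  ∃ (ℓ : ℕ) (S : ℕ → Set V),
    (∀ t, 1 ≤ t → t ≤ ℓ → (S t).ncard ≤ k) ∧ FC G S ℓ = Set.univ

/-- The inspection number of `G`: the least `k` admitting a successful `k`-search. -/
noncomputable def inspectionNumber (G : SimpleGraph V) : ℕ :=
  sInf {k | SuccessfulSearch G k}

/-- There is a successful monotonic `k`-search on `G`. -/
def SuccessfulMonotonicSearch (G : SimpleGraph V) (k : ℕ) : Prop :=
  ∃ (ℓ : ℕ) (S : ℕ → Set V),
    (∀ t, 1 ≤ t → t ≤ ℓ → (S t).ncard ≤ k) ∧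
    (∀ i j, i ≤ j → j ≤ ℓ → FC G S i ⊆ FC G S j) ∧
    FC G S ℓ = Set.univ

/-- The monotonic inspection number of `G`. -/
noncomputable def monoInspectionNumber (G : SimpleGraph V) : ℕ :=
  sInf {k | SuccessfulMonotonicSearch G k}

/-- A path decomposition `X 1, ..., X ℓ` of `G`: every edge is contained in some bag, and
for `i ≤ j ≤ k` we have `X i ∩ X k ⊆ X j`. -/
def IsPathDecomp (G : SimpleGraph V) (ℓ : ℕ) (X : ℕ → Set V) : Prop :=
  (∀ u v : V, G.Adj u v → ∃ i, 1 ≤ i ∧ i ≤ ℓ ∧ u ∈ X i ∧ v ∈ X i) ∧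
  (∀ i j k, 1 ≤ i → i ≤ j → j ≤ k → k ≤ ℓ → X i ∩ X k ⊆ X j)

/-- The pathwidth of `G`: the least `w` such that `G` has a path decomposition all of whose
bags have size at most `w + 1`. -/
noncomputable def pathwidth (G : SimpleGraph V) : ℕ :=
  sInf {w | ∃ (ℓ : ℕ) (X : ℕ → Set V), IsPathDecomp G ℓ X ∧
    ∀ i, 1 ≤ i → i ≤ ℓ → (X i).ncard ≤ w + 1}

/-- Witness data exhibiting `H` as a subdivision of `G`: an injection `f` of the vertices of
`G` into those of `H` and, for each edge of `G`, a path of `H` between the images of its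
endpoints, these paths being internally disjoint from each other and from the image of `f`,
and jointly covering all vertices and edges of `H`. -/
structure SubdivisionData (G : SimpleGraph V) (H : SimpleGraph W) where
  f : V → W
  inj : Function.Injective f
  walk : ∀ {u v : V}, G.Adj u v → H.Walk (f u) (f v)
  isPath : ∀ {u v : V} (h : G.Adj u v), (walk h).IsPath
  symm : ∀ {u v : V} (h : G.Adj u v), walk h.symm = (walk h).reverse
  disj : ∀ {u v x y : V} (h₁ : G.Adj u v) (h₂ : G.Adj x y), s(u, v) ≠ s(x, y) →
      ∀ w : W, w ∈ (walk h₁).support → w ∈ (walk h₂).support → w ∈ Set.range f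
  branch : ∀ {u v : V} (h : G.Adj u v) (w : W),
      w ∈ (walk h).support → w ∈ Set.range f → w = f u ∨ w = f v
  cover_vert : ∀ w : W, w ∈ Set.range f ∨ ∃ (u v : V) (h : G.Adj u v), w ∈ (walk h).support
  cover_edge : ∀ e ∈ H.edgeSet, ∃ (u v : V) (h : G.Adj u v), e ∈ (walk h).edges

/-- `H` is a subdivision of `G`. -/
def IsSubdivision (G : SimpleGraph V) (H : SimpleGraph W) : Prop :=
  Nonempty (SubdivisionData G H)

/-- The topological inspection number of `G`: the least `k` such that every subdivision of
`G` has a further subdivision with inspection number at most `k`. -/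
noncomputable def topInspectionNumber (G : SimpleGraph V) : ℕ :=
  sInf {k | ∀ (W' : Type) (H : SimpleGraph W'), IsSubdivision G H →
    ∃ (W'' : Type) (H' : SimpleGraph W''), IsSubdivision H H' ∧ inspectionNumber H' ≤ k}


lemma getVert_eq_support_getElem {G : SimpleGraph V} {u v : V}
    (p : G.Walk u v) (i : ℕ) (h : i < p.support.length) :
    p.support[i] = p.getVert i := by
  induction p generalizing i with
  | nil =>
    have : i = 0 := by simp [SimpleGraph.Walk.support_nil] at h; omega
    subst this; rfl
  | cons hadj q ih =>
    cases i with
    | zero => simp [SimpleGraph.Walk.getVert]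
    | succ n =>
      simp only [SimpleGraph.Walk.support_cons, List.getElem_cons_succ,
        SimpleGraph.Walk.getVert_cons_succ]
      exact ih n (by simpa [SimpleGraph.Walk.support_cons] using h)

lemma cycle_two_neighbors {G : SimpleGraph V} {z : V}
    (c : G.Walk z z) (hc : c.IsCycle) :
    ∃ a b, a ≠ b ∧ G.Adj z a ∧ G.Adj z b ∧ a ∈ c.support ∧ b ∈ c.support := by
  have hlen := hc.three_le_length
  have hslen : c.support.length = c.length + 1 := c.length_support
  have htl : c.support.tail.length = c.length := by
    rw [List.length_tail, hslen]; omega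
  refine ⟨c.getVert 1, c.getVert (c.length - 1), ?_, ?_, ?_, ?_, ?_⟩
  · intro hEq
    have hnd : c.support.tail.Nodup := hc.support_nodup
    have h1 : (0 : ℕ) < c.support.tail.length := by omega
    have h2 : c.length - 2 < c.support.tail.length := by omega
    have e1 : c.support.tail[0] = c.getVert 1 := by
      rw [List.getElem_tail]
      exact getVert_eq_support_getElem c 1 (by omega)
    have e2 : c.support.tail[c.length - 2] = c.getVert (c.length - 1) := by
      rw [List.getElem_tail]
      rw [getVert_eq_support_getElem c (c.length - 2 + 1) (by omega)]
      congr 1; omega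
    have : (0 : ℕ) = c.length - 2 := by
      rw [← hnd.getElem_inj_iff (hi := h1) (hj := h2), e1, e2, hEq]
    omega
  · have := c.adj_getVert_succ (i := 0) (by omega)
    simpa using this
  · have := c.adj_getVert_succ (i := c.length - 1) (by omega)
    rw [show c.length - 1 + 1 = c.length by omega, c.getVert_length] at this
    exact this.symm
  · exact SimpleGraph.Walk.mem_support_iff_exists_getVert.mpr ⟨1, rfl, by omega⟩
  · exact SimpleGraph.Walk.mem_support_iff_exists_getVert.mpr ⟨c.length - 1, rfl, by omega⟩

/-- Every vertex of a cycle has two distinct neighbors within the cycle. -/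
lemma cycle_two_neighbors' {G : SimpleGraph V} {u z : V}
    (c : G.Walk u u) (hc : c.IsCycle) (hz : z ∈ c.support) :
    ∃ a b, a ≠ b ∧ G.Adj z a ∧ G.Adj z b ∧ a ∈ c.support ∧ b ∈ c.support := by
  classical
  obtain ⟨a, b, hab, ha, hb, haS, hbS⟩ := cycle_two_neighbors (c.rotate z hz) (hc.rotate hz)
  have hmem : ∀ w : V, w ∈ (c.rotate z hz).support ↔ w ∈ c.support := by
    intro w
    rw [← SimpleGraph.Walk.mem_verts_toSubgraph, ← SimpleGraph.Walk.mem_verts_toSubgraph,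
      SimpleGraph.Walk.toSubgraph_rotate]
  exact ⟨a, b, hab, ha, hb, (hmem a).mp haS, (hmem b).mp hbS⟩

/-- If a finite simple graph `G` contains a cycle as a subgraph, then
`in(G) ≥ 3`. -/
theorem three_le_inspectionNumber_of_cycle {V : Type} [Fintype V] (G : SimpleGraph V)
    (h : ∃ (u : V) (c : G.Walk u u), c.IsCycle) :
    3 ≤ inspectionNumber G := by
  obtain ⟨u, c, hc⟩ := h
  have key : ∀ k, SuccessfulSearch G k → 3 ≤ k := by
    intro k hk
    by_contra hk3
    push_neg at hk3
    obtain ⟨ℓ, S, hS, hfin⟩ := hk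
    have inv : ∀ t, t ≤ ℓ → ∀ z ∈ c.support, z ∉ FC G S t := by
      intro t
      induction t with
      | zero => intro _ z _ hz; simp [FC] at hz
      | succ t ih =>
        intro ht z hz hzFC
        have ih' := ih (le_trans (Nat.le_succ t) ht)
        have hzP : z ∈ FC G S t ∪ S (t + 1) := hzFC.1
        have hmemS : ∀ w ∈ c.support, w ∈ FC G S t ∪ S (t + 1) → w ∈ S (t + 1) := by
          intro w hw hwP
          exact hwP.resolve_left (ih' w hw)
        have hnb : ∀ w, G.Adj z w → w ∈ FC G S t ∪ S (t + 1) := by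
          intro w hw
          by_contra hwP
          exact hzFC.2 ⟨hzP, w, hwP, hw⟩
        obtain ⟨a, b, hab, ha, hb, haS, hbS⟩ := cycle_two_neighbors' c hc hz
        have hzS : z ∈ S (t + 1) := hmemS z hz hzP
        have haS' : a ∈ S (t + 1) := hmemS a haS (hnb a ha)
        have hbS' : b ∈ S (t + 1) := hmemS b hbS (hnb b hb)
        have hza : z ≠ a := fun e => G.irrefl (e ▸ ha)
        have hzb : z ≠ b := fun e => G.irrefl (e ▸ hb)
        have h3 : ({z, a, b} : Set V).ncard = 3 :=
          Set.ncard_eq_three.mpr ⟨z, a, b, hza, hzb, hab, rfl⟩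
        have hsub : ({z, a, b} : Set V) ⊆ S (t + 1) := by
          intro x hx
          rcases hx with rfl | rfl | rfl <;> assumption
        have hle : 3 ≤ (S (t + 1)).ncard := by
          rw [← h3]
          exact Set.ncard_le_ncard hsub (Set.toFinite _)
        have := hS (t + 1) (by omega) ht
        omega
    have hu : u ∉ FC G S ℓ := inv ℓ le_rfl u c.start_mem_support
    rw [hfin] at hu
    exact hu (Set.mem_univ u)
  have hne : SuccessfulSearch G (Fintype.card V) := by
    refine ⟨1, fun _ => Set.univ, ?_, ?_⟩
    · intro t _ _
      simp [Set.ncard_univ]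
    · simp [FC, boundary]
  exact le_csInf ⟨_, hne⟩ key

end Inspection
end

section
/- For all integers n, m ≥ 2, the inspection number of the n × m grid graph Γ_{n,m} equals min{n, m} + 1. -/
open SimpleGraph


namespace Inspection

variable {V : Type*} {W : Type*}

/-- The `n × m` grid graph: vertices `(i,j)` with `0 ≤ i < n`, `0 ≤ j < m`, and
`(a,b)` adjacent to `(c,d)` iff `|a−c| + |b−d| = 1`. -/
def gridGraph (n m : ℕ) : SimpleGraph (Fin n × Fin m) where
  Adj a b := |(a.1 : ℤ) - (b.1 : ℤ)| + |(a.2 : ℤ) - (b.2 : ℤ)| = 1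
  symm := by
    constructor
    intro a b h
    rw [abs_sub_comm ((b.1 : ℤ)) ((a.1 : ℤ)), abs_sub_comm ((b.2 : ℤ)) ((a.2 : ℤ))]
    exact h
  loopless := by constructor; intro a h; simp at h

section GridAux

open Finset

variable {n m : ℕ}

private lemma abs_helper {a b : ℤ} :
    |a| + |b| = 1 ↔ ((a = 0 ∧ (b = 1 ∨ b = -1)) ∨ (b = 0 ∧ (a = 1 ∨ a = -1))) := by
  rcases abs_cases a with ⟨h1, _⟩ | ⟨h1, _⟩ <;> rcases abs_cases b with ⟨h3, _⟩ | ⟨h3, _⟩ <;>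
    rw [h1, h3] <;> omega

private lemma grid_adj_iff {v w : Fin n × Fin m} :
    (gridGraph n m).Adj v w ↔
      (((v.2 : ℕ) = (w.2 : ℕ)) ∧ ((v.1 : ℕ) + 1 = (w.1 : ℕ) ∨ (w.1 : ℕ) + 1 = (v.1 : ℕ)))
      ∨ (((v.1 : ℕ) = (w.1 : ℕ)) ∧ ((v.2 : ℕ) + 1 = (w.2 : ℕ) ∨ (w.2 : ℕ) + 1 = (v.2 : ℕ))) := by
  have h0 : (gridGraph n m).Adj v w ↔
      |((v.1 : ℕ) : ℤ) - ((w.1 : ℕ) : ℤ)| + |((v.2 : ℕ) : ℤ) - ((w.2 : ℕ) : ℤ)| = 1 := Iff.rfl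
  rw [h0, abs_helper]
  omega

end GridAux
section UB

open Finset

variable {n m : ℕ}

private def pval (v : Fin n × Fin m) : ℕ := (v.1 : ℕ) + (v.2 : ℕ) * n

private lemma pval_lt (v : Fin n × Fin m) : pval v < n * m := by
  have h1 : (v.1 : ℕ) < n := v.1.isLt
  have h2 : (v.2 : ℕ) < m := v.2.isLt
  have h3 : (v.2 : ℕ) + 1 ≤ m := h2
  calc pval v < n + (v.2 : ℕ) * n := by unfold pval; omega
    _ = ((v.2 : ℕ) + 1) * n := by ring
    _ ≤ m * n := Nat.mul_le_mul_right _ h3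
    _ = n * m := Nat.mul_comm _ _

private lemma pval_inj (hn : 0 < n) : Function.Injective (pval (n := n) (m := m)) := by
  intro v w h
  have h1 : (v.1 : ℕ) = (w.1 : ℕ) := by
    have h2 := congrArg (· % n) h
    simpa [pval, Nat.add_mul_mod_self_right, Nat.mod_eq_of_lt v.1.isLt,
      Nat.mod_eq_of_lt w.1.isLt] using h2
  have h2 : (v.2 : ℕ) = (w.2 : ℕ) := by
    have h3 := congrArg (· / n) h
    simpa [pval, Nat.add_mul_div_right _ _ hn, Nat.div_eq_of_lt v.1.isLt,
      Nat.div_eq_of_lt w.1.isLt] using h3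
  exact Prod.ext (Fin.ext h1) (Fin.ext h2)

private lemma pval_adj {v w : Fin n × Fin m} (h : (gridGraph n m).Adj v w) :
    pval w ≤ pval v + n ∧ pval v ≤ pval w + n := by
  have e : ∀ a b : ℕ, a + 1 = b → b * n = a * n + n := by
    intro a b hab; subst hab; ring
  rcases grid_adj_iff.mp h with ⟨h1, h2⟩ | ⟨h1, h2⟩
  · have e2 : (v.2 : ℕ) * n = (w.2 : ℕ) * n := by rw [h1]
    unfold pval; omega
  · rcases h2 with h2 | h2
    · have := e _ _ h2; unfold pval; omega
    · have := e _ _ h2; unfold pval; omega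

private lemma ub_lemma (hn : 1 ≤ n) (hm : 2 ≤ m) : SuccessfulSearch (gridGraph n m) (n + 1) := by
  classical
  set G := gridGraph n m with hG
  set S' : ℕ → Set (Fin n × Fin m) := fun t => {v | t - 1 ≤ pval v ∧ pval v < n + t} with hS'
  have hnm : 2 * n ≤ n * m := by
    calc 2 * n = n * 2 := Nat.mul_comm _ _
      _ ≤ n * m := Nat.mul_le_mul_left _ hm
  -- the two key invariants
  have key : ∀ t, ({v : Fin n × Fin m | pval v < t} ⊆ FC G S' t) ∧
      (FC G S' t ⊆ {v | pval v < n + t}) := by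
    intro t; induction t with
    | zero =>
      constructor
      · intro v hv; simp only [Set.mem_setOf_eq] at hv; omega
      · intro v hv; simp only [FC, Set.mem_empty_iff_false] at hv
    | succ t ih =>
      have hPC : FC G S' t ∪ S' (t + 1) = {v | pval v < n + (t + 1)} := by
        apply Set.Subset.antisymm
        · intro v hv
          simp only [Set.mem_setOf_eq]
          rcases hv with hv | hv
          · have := ih.2 hv; simp only [Set.mem_setOf_eq] at this; omega
          · simp only [hS', Set.mem_setOf_eq] at hv; omega
        · intro v hv
          simp only [Set.mem_setOf_eq] at hv
          by_cases hc : pval v < t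
          · exact Or.inl (ih.1 hc)
          · exact Or.inr (by simp only [hS', Set.mem_setOf_eq]; omega)
      constructor
      · intro v hv
        simp only [Set.mem_setOf_eq] at hv
        have hvPC : v ∈ FC G S' t ∪ S' (t + 1) := by
          rw [hPC]; simp only [Set.mem_setOf_eq]; omega
        simp only [FC]
        refine ⟨hvPC, ?_⟩
        rintro ⟨-, w, hw, hadj⟩
        rw [hPC] at hw
        simp only [Set.mem_setOf_eq] at hw
        have := pval_adj hadj
        omega
      · intro v hv
        simp only [FC] at hv
        have := hv.1
        rw [hPC] at this
        simp only [Set.mem_setOf_eq] at this ⊢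
        omega
  refine ⟨n * m - n, S', ?_, ?_⟩
  · intro t ht _
    have hinj : Set.InjOn pval (S' t) := (pval_inj (show 0 < n from hn)).injOn
    have h1 : (S' t).ncard = (pval '' S' t).ncard := (Set.ncard_image_of_injOn hinj).symm
    have h2 : pval '' S' t ⊆ ↑(Finset.Ico (t - 1) (n + t)) := by
      rintro x ⟨v, hv, rfl⟩
      simp only [hS', Set.mem_setOf_eq] at hv
      simp only [Finset.coe_Ico, Set.mem_Ico]
      omega
    calc (S' t).ncard = (pval '' S' t).ncard := h1
      _ ≤ (↑(Finset.Ico (t - 1) (n + t)) : Set ℕ).ncard :=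
          Set.ncard_le_ncard h2 (Finset.finite_toSet _)
      _ = (Finset.Ico (t - 1) (n + t)).card := Set.ncard_coe_finset _
      _ = n + t - (t - 1) := Nat.card_Ico _ _
      _ ≤ n + 1 := by omega
  · obtain ⟨K, hK⟩ : ∃ K, n * m - n = K + 1 := ⟨n * m - n - 1, by omega⟩
    rw [hK]
    have hPCL : FC G S' K ∪ S' (K + 1) = Set.univ := by
      apply Set.eq_univ_of_forall
      intro v
      by_cases hc : pval v < K
      · exact Or.inl ((key K).1 hc)
      · refine Or.inr ?_
        simp only [hS', Set.mem_setOf_eq]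
        have := pval_lt v
        omega
    simp only [FC]
    rw [hPCL]
    have hbd : boundary G Set.univ = (∅ : Set (Fin n × Fin m)) := by
      apply Set.eq_empty_of_forall_notMem
      rintro v ⟨-, w, hw, -⟩
      exact hw (Set.mem_univ w)
    rw [hbd, Set.diff_empty]

end UB
section IsoAux

open Finset

private lemma sum_shift (f : ℕ → ℕ) (k : ℕ) :
    ∀ a c, a ≤ c → ∑ i ∈ Ico a c, f (i + k) = ∑ i ∈ Ico (a + k) (c + k), f i := by
  intro a c hac
  induction c, hac using Nat.le_induction with
  | base => simp
  | succ c hac ih =>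
    rw [sum_Ico_succ_top hac, ih, show c + 1 + k = (c + k) + 1 from by omega,
      sum_Ico_succ_top (by omega : a + k ≤ c + k)]

private lemma chain_up (mm b : ℕ) (M g : ℕ → ℕ)
    (hr : ∀ j, j + 1 < mm → g (j + 1) ≤ g j + M (j + b)) :
    ∀ a c, a ≤ c → c < mm → g c ≤ g a + ∑ i ∈ Ico a c, M (i + b) := by
  intro a c hac
  induction c, hac using Nat.le_induction with
  | base => intro _; simp
  | succ c hac ih =>
    intro hcm
    have h1 := ih (by omega)
    have h2 := hr c (by omega)
    rw [sum_Ico_succ_top hac]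
    omega

private lemma chain_down (mm b : ℕ) (M g : ℕ → ℕ)
    (hl : ∀ j, j + 1 < mm → g j ≤ g (j + 1) + M (j + 1 - b)) :
    ∀ a c, a ≤ c → c < mm → g a ≤ g c + ∑ i ∈ Ico a c, M (i + 1 - b) := by
  intro a c hac
  induction c, hac using Nat.le_induction with
  | base => intro _; simp
  | succ c hac ih =>
    intro hcm
    have h1 := ih (by omega)
    have h2 := hl c (by omega)
    rw [sum_Ico_succ_top hac]
    omega

private lemma dist_sum (P₀ : Finset ℕ) (d : ℕ → ℕ)
    (H₀ : ∀ j ∈ P₀, d j ≤ (P₀.filter fun j' => d j' < d j).card + 1) :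
    2 * ∑ j ∈ P₀, (d j - 1) + P₀.card ≤ P₀.card * P₀.card := by
  classical
  suffices Hs : ∀ c (P : Finset ℕ), P.card = c →
      (∀ j ∈ P, d j ≤ (P.filter fun j' => d j' < d j).card + 1) →
      2 * ∑ j ∈ P, (d j - 1) + P.card ≤ P.card * P.card from
    Hs P₀.card P₀ rfl H₀
  intro c
  induction c with
  | zero =>
    intro P hc _
    rw [Finset.card_eq_zero] at hc
    subst hc
    simp
  | succ c ih =>
    intro P hc H
    have hne : P.Nonempty := by rw [← Finset.card_pos, hc]; omega
    obtain ⟨j₀, hj₀, hmax⟩ := Finset.exists_max_image P d hne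
    set P' := P.erase j₀ with hP'
    have hc' : P'.card = c := by rw [hP', Finset.card_erase_of_mem hj₀, hc]; omega
    have hfilt : ∀ j ∈ P, (P.filter fun j' => d j' < d j) ⊆ P' := by
      intro j hj x hx
      obtain ⟨hxP, hxd⟩ := Finset.mem_filter.mp hx
      rw [hP', Finset.mem_erase]
      refine ⟨?_, hxP⟩
      rintro rfl
      exact absurd (hmax j hj) (by omega)
    have hH' : ∀ j ∈ P', d j ≤ (P'.filter fun j' => d j' < d j).card + 1 := by
      intro j hj
      have hjP := Finset.mem_of_mem_erase hj
      have h1 := H j hjP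
      have h2 : (P.filter fun j' => d j' < d j) ⊆ (P'.filter fun j' => d j' < d j) := by
        intro x hx
        exact Finset.mem_filter.mpr ⟨hfilt j hjP hx, (Finset.mem_filter.mp hx).2⟩
      have := Finset.card_le_card h2
      omega
    have hd₀ : d j₀ ≤ c + 1 := by
      have h1 := H j₀ hj₀
      have h2 := Finset.card_le_card (hfilt j₀ hj₀)
      omega
    have hsum : ∑ j ∈ P, (d j - 1) = (d j₀ - 1) + ∑ j ∈ P', (d j - 1) :=
      (Finset.add_sum_erase P _ hj₀).symm
    have ihP := ih P' hc' hH'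
    have hexp : (c + 1) * (c + 1) = c * c + 2 * c + 1 := by ring
    rw [hc, hsum, hc'] at *
    omega

private lemma profile_sum (mm b : ℕ) (hb : b ≤ 1) (M g : ℕ → ℕ) (A : Finset ℕ)
    (hA : A ⊆ range mm) (hAne : A.Nonempty)
    (hg0 : ∀ j ∈ A, g j = 0)
    (hr : ∀ j, j + 1 < mm → g (j + 1) ≤ g j + M (j + b))
    (hl : ∀ j, j + 1 < mm → g j ≤ g (j + 1) + M (j + 1 - b)) :
    2 * ∑ j ∈ range mm \ A, g j ≤
      2 * ((range mm \ A).card * ((∑ j ∈ A, M j) + (∑ j ∈ range mm \ A, (M j - 1)) + b))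
      + (range mm \ A).card * ((range mm \ A).card - 1) := by
  classical
  set P := range mm \ A with hP
  obtain ⟨d, hnear, hdle⟩ : ∃ d : ℕ → ℕ, (∀ j, ∃ p ∈ A, max (j - p) (p - j) = d j) ∧
      (∀ j, ∀ a ∈ A, d j ≤ max (j - a) (a - j)) := by
    refine ⟨fun j => A.inf' hAne (fun a => max (j - a) (a - j)), fun j => ?_, fun j a ha => ?_⟩
    · obtain ⟨p, hp, he⟩ := Finset.exists_mem_eq_inf' hAne (fun a => max (j - a) (a - j))
      exact ⟨p, hp, he.symm⟩
    · exact Finset.inf'_le _ ha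
  have hbtw : ∀ j ∈ P, ∀ p ∈ A, max (j - p) (p - j) = d j →
      ∀ i, (p < i ∧ i < j) ∨ (j < i ∧ i < p) → i ∈ P ∧ d i < d j := by
    intro j hj p hp hdp i hi
    obtain ⟨hjm, hjA⟩ := Finset.mem_sdiff.mp hj
    have hjmm : j < mm := Finset.mem_range.mp hjm
    have hpmm : p < mm := Finset.mem_range.mp (hA hp)
    rcases hi with ⟨hi1, hi2⟩ | ⟨hi1, hi2⟩ <;>
    · have him : i ∈ range mm := Finset.mem_range.mpr (by omega)
      have hiA : i ∉ A := by
        intro hiA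
        have := hdle j i hiA
        omega
      refine ⟨Finset.mem_sdiff.mpr ⟨him, hiA⟩, ?_⟩
      have h1 := hdle i p hp
      omega
  have hkey : ∀ j ∈ P, g j ≤ ((∑ a ∈ A, M a) + (∑ i ∈ P, (M i - 1)) + b) + (d j - 1) := by
    intro j hj
    obtain ⟨p, hp, hdp⟩ := hnear j
    obtain ⟨hjm, hjA⟩ := Finset.mem_sdiff.mp hj
    have hjmm : j < mm := Finset.mem_range.mp hjm
    have hpmm : p < mm := Finset.mem_range.mp (hA hp)
    have hpj : p ≠ j := fun he => hjA (he ▸ hp)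
    have hgp : g p = 0 := hg0 p hp
    have hMA : M p ≤ ∑ a ∈ A, M a := Finset.single_le_sum (fun a _ => Nat.zero_le _) hp
    rcases lt_or_gt_of_ne hpj with hpj' | hpj'
    · have hchain := chain_up mm b M g hr p j (le_of_lt hpj') hjmm
      rw [hgp, zero_add, sum_shift M b p j (le_of_lt hpj')] at hchain
      have hsub : Finset.Ioo p j ⊆ P := fun i hi =>
        (hbtw j hj p hp hdp i (Or.inl (Finset.mem_Ioo.mp hi))).1
      have hcard : (Finset.Ioo p j).card = d j - 1 := by rw [Nat.card_Ioo]; omega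
      have h3 : ∑ i ∈ Finset.Ioo p j, (M i - 1) ≤ ∑ i ∈ P, (M i - 1) :=
        Finset.sum_le_sum_of_subset hsub
      have h2 : ∑ i ∈ Finset.Ioo p j, M i ≤ (∑ i ∈ Finset.Ioo p j, (M i - 1)) + (d j - 1) := by
        have hle : ∑ i ∈ Finset.Ioo p j, M i ≤ ∑ i ∈ Finset.Ioo p j, ((M i - 1) + 1) :=
          Finset.sum_le_sum (fun i _ => by omega)
        rw [Finset.sum_add_distrib, Finset.sum_const, smul_eq_mul, mul_one, hcard] at hle
        omega
      interval_cases b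
      · have hico : Finset.Ico (p + 0) (j + 0) = insert p (Finset.Ioo p j) := by
          ext x
          simp only [Finset.mem_Ico, Finset.mem_Ioo, Finset.mem_insert]
          omega
        rw [hico, Finset.sum_insert (by simp)] at hchain
        omega
      · have hico : Finset.Ico (p + 1) (j + 1) = insert j (Finset.Ioo p j) := by
          ext x
          simp only [Finset.mem_Ico, Finset.mem_Ioo, Finset.mem_insert]
          omega
        rw [hico, Finset.sum_insert (by simp)] at hchain
        have hMj : M j - 1 ≤ ∑ i ∈ P \ Finset.Ioo p j, (M i - 1) :=
          Finset.single_le_sum (f := fun i => M i - 1) (fun a _ => Nat.zero_le _)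
            (Finset.mem_sdiff.mpr ⟨hj, by simp⟩)
        have hsplit : (∑ i ∈ P \ Finset.Ioo p j, (M i - 1)) + (∑ i ∈ Finset.Ioo p j, (M i - 1))
            = ∑ i ∈ P, (M i - 1) := Finset.sum_sdiff hsub
        omega
    · have hchain := chain_down mm b M g hl j p (le_of_lt hpj') hpmm
      rw [hgp] at hchain
      have hsub : Finset.Ioo j p ⊆ P := fun i hi =>
        (hbtw j hj p hp hdp i (Or.inr (Finset.mem_Ioo.mp hi))).1
      have hcard : (Finset.Ioo j p).card = d j - 1 := by rw [Nat.card_Ioo]; omega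
      have h3 : ∑ i ∈ Finset.Ioo j p, (M i - 1) ≤ ∑ i ∈ P, (M i - 1) :=
        Finset.sum_le_sum_of_subset hsub
      have h2 : ∑ i ∈ Finset.Ioo j p, M i ≤ (∑ i ∈ Finset.Ioo j p, (M i - 1)) + (d j - 1) := by
        have hle : ∑ i ∈ Finset.Ioo j p, M i ≤ ∑ i ∈ Finset.Ioo j p, ((M i - 1) + 1) :=
          Finset.sum_le_sum (fun i _ => by omega)
        rw [Finset.sum_add_distrib, Finset.sum_const, smul_eq_mul, mul_one, hcard] at hle
        omega
      interval_cases b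
      · simp only [Nat.sub_zero] at hchain
        rw [sum_shift M 1 j p (le_of_lt hpj')] at hchain
        have hico : Finset.Ico (j + 1) (p + 1) = insert p (Finset.Ioo j p) := by
          ext x
          simp only [Finset.mem_Ico, Finset.mem_Ioo, Finset.mem_insert]
          omega
        rw [hico, Finset.sum_insert (by simp)] at hchain
        omega
      · simp only [Nat.add_sub_cancel] at hchain
        have hico : Finset.Ico j p = insert j (Finset.Ioo j p) := by
          ext x
          simp only [Finset.mem_Ico, Finset.mem_Ioo, Finset.mem_insert]
          omega
        rw [hico, Finset.sum_insert (by simp)] at hchain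
        have hMj : M j - 1 ≤ ∑ i ∈ P \ Finset.Ioo j p, (M i - 1) :=
          Finset.single_le_sum (f := fun i => M i - 1) (fun a _ => Nat.zero_le _)
            (Finset.mem_sdiff.mpr ⟨hj, by simp⟩)
        have hsplit : (∑ i ∈ P \ Finset.Ioo j p, (M i - 1)) + (∑ i ∈ Finset.Ioo j p, (M i - 1))
            = ∑ i ∈ P, (M i - 1) := Finset.sum_sdiff hsub
        omega
  have hrank : ∀ j ∈ P, d j ≤ (P.filter fun j' => d j' < d j).card + 1 := by
    intro j hj
    obtain ⟨p, hp, hdp⟩ := hnear j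
    obtain ⟨hjm, hjA⟩ := Finset.mem_sdiff.mp hj
    have hpj : p ≠ j := fun he => hjA (he ▸ hp)
    rcases lt_or_gt_of_ne hpj with h | h
    · have hsub : Finset.Ioo p j ⊆ P.filter (fun j' => d j' < d j) := by
        intro i hi
        obtain ⟨h1, h2⟩ := hbtw j hj p hp hdp i (Or.inl (Finset.mem_Ioo.mp hi))
        exact Finset.mem_filter.mpr ⟨h1, h2⟩
      have := Finset.card_le_card hsub
      rw [Nat.card_Ioo] at this
      omega
    · have hsub : Finset.Ioo j p ⊆ P.filter (fun j' => d j' < d j) := by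
        intro i hi
        obtain ⟨h1, h2⟩ := hbtw j hj p hp hdp i (Or.inr (Finset.mem_Ioo.mp hi))
        exact Finset.mem_filter.mpr ⟨h1, h2⟩
      have := Finset.card_le_card hsub
      rw [Nat.card_Ioo] at this
      omega
  have hsumle : ∑ j ∈ P, g j ≤
      P.card * ((∑ a ∈ A, M a) + (∑ i ∈ P, (M i - 1)) + b) + ∑ j ∈ P, (d j - 1) := by
    calc ∑ j ∈ P, g j
        ≤ ∑ j ∈ P, (((∑ a ∈ A, M a) + (∑ i ∈ P, (M i - 1)) + b) + (d j - 1)) :=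
          Finset.sum_le_sum hkey
      _ = P.card * ((∑ a ∈ A, M a) + (∑ i ∈ P, (M i - 1)) + b) + ∑ j ∈ P, (d j - 1) := by
          rw [Finset.sum_add_distrib, Finset.sum_const, smul_eq_mul]
  have hds := dist_sum P d hrank
  have hWW : P.card * (P.card - 1) + P.card = P.card * P.card := by
    rcases Nat.eq_zero_or_pos P.card with h | h
    · simp [h]
    · have h1 : 1 ≤ P.card := h
      zify [h1]; ring
  omega

end IsoAux
section IsoMain

open Finset

variable {n m : ℕ}

private lemma exists_step_up (R : Finset ℕ) :
    ∀ k a c, c - a ≤ k → a ∈ R → c ∉ R → a < c → ∃ i, a ≤ i ∧ i < c ∧ i ∈ R ∧ i + 1 ∉ R := by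
  intro k
  induction k with
  | zero => intro a c h _ _ hac; omega
  | succ k ih =>
    intro a c h ha hc hac
    by_cases h1 : a + 1 = c
    · exact ⟨a, le_refl _, by omega, ha, h1 ▸ hc⟩
    · by_cases h2 : a + 1 ∈ R
      · obtain ⟨i, h3, h4, h5, h6⟩ := ih (a + 1) c (by omega) h2 hc (by omega)
        exact ⟨i, by omega, h4, h5, h6⟩
      · exact ⟨a, le_refl _, by omega, ha, h2⟩

private lemma exists_step_down (R : Finset ℕ) :
    ∀ k a c, a - c ≤ k → a ∈ R → c ∉ R → c < a → ∃ i, c < i ∧ i ≤ a ∧ i ∈ R ∧ i - 1 ∉ R := by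
  intro k
  induction k with
  | zero => intro a c h _ _ hac; omega
  | succ k ih =>
    intro a c h ha hc hac
    by_cases h1 : c + 1 = a
    · refine ⟨a, by omega, le_refl _, ha, ?_⟩
      rw [show a - 1 = c from by omega]; exact hc
    · by_cases h2 : a - 1 ∈ R
      · obtain ⟨i, h3, h4, h5, h6⟩ := ih (a - 1) c (by omega) h2 hc (by omega)
        exact ⟨i, h3, by omega, h5, h6⟩
      · exact ⟨a, by omega, le_refl _, ha, h2⟩

open Classical in
private noncomputable def bnd (X : Finset (Fin n × Fin m)) : Finset (Fin n × Fin m) :=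
  X.filter fun v => ∃ w, w ∉ X ∧ (gridGraph n m).Adj v w

set_option maxHeartbeats 1000000 in
private lemma iso_main (hn : 2 ≤ n) (hnm : n ≤ m) (X : Finset (Fin n × Fin m))
    (h1 : n * (n - 1) < 2 * X.card) (h2 : 2 * X.card ≤ n * (n - 1) + 2 * n) :
    n ≤ (bnd X).card := by
  classical
  by_contra hcon
  push_neg at hcon
  set h : ℕ → ℕ := fun j => (X.filter fun v => (v.2 : ℕ) = j).card with hh
  set bj : ℕ → ℕ := fun j => ((bnd X).filter fun v => (v.2 : ℕ) = j).card with hbj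
  have hXcard : X.card = ∑ j ∈ range m, h j :=
    card_eq_sum_card_fiberwise (fun v _ => mem_range.mpr v.2.isLt)
  have hBcard : (bnd X).card = ∑ j ∈ range m, bj j :=
    card_eq_sum_card_fiberwise (fun v _ => mem_range.mpr v.2.isLt)
  have hBle : ∑ j ∈ range m, bj j ≤ n - 1 := by rw [← hBcard]; omega
  have hhle : ∀ j, h j ≤ n := by
    intro j
    have hc : (X.filter fun v => (v.2 : ℕ) = j).card ≤ (Finset.univ : Finset (Fin n)).card := by
      apply Finset.card_le_card_of_injOn (fun v => v.1) (fun v _ => Finset.mem_univ _)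
      intro v hv u hu he
      have hv2 := (Finset.mem_filter.mp hv).2
      have hu2 := (Finset.mem_filter.mp hu).2
      exact Prod.ext he (Fin.ext (hv2.trans hu2.symm))
    simpa using hc
  have hb_right : ∀ j, j + 1 < m → h j ≤ h (j + 1) + bj j := by
    intro j hjm
    have hsplit := Finset.card_filter_add_card_filter_not
      (s := X.filter fun v => (v.2 : ℕ) = j)
      (p := fun v => (v.1, (⟨j + 1, hjm⟩ : Fin m)) ∈ X)
    have hA1 : ((X.filter fun v => (v.2 : ℕ) = j).filter
        (fun v => (v.1, (⟨j + 1, hjm⟩ : Fin m)) ∈ X)).card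
        ≤ (X.filter fun v => (v.2 : ℕ) = j + 1).card := by
      apply Finset.card_le_card_of_injOn (fun v => (v.1, (⟨j + 1, hjm⟩ : Fin m)))
      · intro v hv
        exact Finset.mem_filter.mpr ⟨(Finset.mem_filter.mp hv).2, rfl⟩
      · intro v hv u hu he
        have hv2 := (Finset.mem_filter.mp (Finset.mem_filter.mp hv).1).2
        have hu2 := (Finset.mem_filter.mp (Finset.mem_filter.mp hu).1).2
        have he' : (v.1, (⟨j + 1, hjm⟩ : Fin m)) = (u.1, (⟨j + 1, hjm⟩ : Fin m)) := he
        have h1' : v.1 = u.1 := ((Prod.mk.injEq _ _ _ _).mp he').1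
        exact Prod.ext h1' (Fin.ext (hv2.trans hu2.symm))
    have hA2 : ((X.filter fun v => (v.2 : ℕ) = j).filter
        (fun v => ¬ ((v.1, (⟨j + 1, hjm⟩ : Fin m)) ∈ X))).card ≤ bj j := by
      apply Finset.card_le_card
      intro v hv
      obtain ⟨hvA, hnot⟩ := Finset.mem_filter.mp hv
      obtain ⟨hvX, hvj⟩ := Finset.mem_filter.mp hvA
      refine Finset.mem_filter.mpr ⟨?_, hvj⟩
      refine Finset.mem_filter.mpr ⟨hvX, ⟨(v.1, ⟨j + 1, hjm⟩), hnot, ?_⟩⟩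
      rw [grid_adj_iff]
      refine Or.inr ⟨rfl, Or.inl ?_⟩
      show (v.2 : ℕ) + 1 = (j : ℕ) + 1
      omega
    have e1 : h j = (X.filter fun v => (v.2 : ℕ) = j).card := rfl
    have e2 : h (j + 1) = (X.filter fun v => (v.2 : ℕ) = j + 1).card := rfl
    omega
  have hb_left : ∀ j, 1 ≤ j → j < m → h j ≤ h (j - 1) + bj j := by
    intro j hj1 hjm
    have hjm' : j - 1 < m := by omega
    have hsplit := Finset.card_filter_add_card_filter_not
      (s := X.filter fun v => (v.2 : ℕ) = j)
      (p := fun v => (v.1, (⟨j - 1, hjm'⟩ : Fin m)) ∈ X)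
    have hA1 : ((X.filter fun v => (v.2 : ℕ) = j).filter
        (fun v => (v.1, (⟨j - 1, hjm'⟩ : Fin m)) ∈ X)).card
        ≤ (X.filter fun v => (v.2 : ℕ) = j - 1).card := by
      apply Finset.card_le_card_of_injOn (fun v => (v.1, (⟨j - 1, hjm'⟩ : Fin m)))
      · intro v hv
        exact Finset.mem_filter.mpr ⟨(Finset.mem_filter.mp hv).2, rfl⟩
      · intro v hv u hu he
        have hv2 := (Finset.mem_filter.mp (Finset.mem_filter.mp hv).1).2
        have hu2 := (Finset.mem_filter.mp (Finset.mem_filter.mp hu).1).2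
        have he' : (v.1, (⟨j - 1, hjm'⟩ : Fin m)) = (u.1, (⟨j - 1, hjm'⟩ : Fin m)) := he
        have h1' : v.1 = u.1 := ((Prod.mk.injEq _ _ _ _).mp he').1
        exact Prod.ext h1' (Fin.ext (hv2.trans hu2.symm))
    have hA2 : ((X.filter fun v => (v.2 : ℕ) = j).filter
        (fun v => ¬ ((v.1, (⟨j - 1, hjm'⟩ : Fin m)) ∈ X))).card ≤ bj j := by
      apply Finset.card_le_card
      intro v hv
      obtain ⟨hvA, hnot⟩ := Finset.mem_filter.mp hv
      obtain ⟨hvX, hvj⟩ := Finset.mem_filter.mp hvA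
      refine Finset.mem_filter.mpr ⟨?_, hvj⟩
      refine Finset.mem_filter.mpr ⟨hvX, ⟨(v.1, ⟨j - 1, hjm'⟩), hnot, ?_⟩⟩
      rw [grid_adj_iff]
      refine Or.inr ⟨rfl, Or.inr ?_⟩
      show (j - 1 : ℕ) + 1 = (v.2 : ℕ)
      omega
    have e1 : h j = (X.filter fun v => (v.2 : ℕ) = j).card := rfl
    have e2 : h (j - 1) = (X.filter fun v => (v.2 : ℕ) = j - 1).card := rfl
    omega
  have hb_mid : ∀ j, j < m → 0 < h j → h j < n → 1 ≤ bj j := by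
    intro j hjm h0 hn'
    set R : Finset ℕ := (X.filter fun v => (v.2 : ℕ) = j).image (fun v => (v.1 : ℕ)) with hR
    have hfound : ∀ i i', i ∈ R → i' ∉ R → i' < n → ((i : ℕ) + 1 = i' ∨ i' + 1 = i) →
        1 ≤ bj j := by
      intro i i' hiR hi'R hi'n hadj
      obtain ⟨v, hv, hvi⟩ := Finset.mem_image.mp hiR
      obtain ⟨hvX, hvj⟩ := Finset.mem_filter.mp hv
      have hwX : ((⟨i', hi'n⟩ : Fin n), v.2) ∉ X := by
        intro hw
        exact hi'R (Finset.mem_image.mpr ⟨_, Finset.mem_filter.mpr ⟨hw, hvj⟩, rfl⟩)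
      have hvb : v ∈ bnd X := by
        refine Finset.mem_filter.mpr ⟨hvX, ⟨((⟨i', hi'n⟩ : Fin n), v.2), hwX, ?_⟩⟩
        rw [grid_adj_iff]
        refine Or.inl ⟨rfl, ?_⟩
        show (v.1 : ℕ) + 1 = i' ∨ i' + 1 = (v.1 : ℕ)
        omega
      exact Finset.card_pos.mpr ⟨v, Finset.mem_filter.mpr ⟨hvb, hvj⟩⟩
    have hRsub : R ⊆ range n := by
      intro i hi
      obtain ⟨v, _, rfl⟩ := Finset.mem_image.mp hi
      exact mem_range.mpr v.1.isLt
    have hRcard : R.card ≤ h j := Finset.card_image_le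
    have hRne : R.Nonempty :=
      (Finset.card_pos.mp h0).image _
    obtain ⟨a, ha⟩ := hRne
    obtain ⟨c, hcr, hcR⟩ : ∃ c, c ∈ range n ∧ c ∉ R := by
      by_contra hcc
      push_neg at hcc
      have hss : range n ⊆ R := fun c hc => hcc c hc
      have := Finset.card_le_card hss
      rw [Finset.card_range] at this
      omega
    have hcn : c < n := mem_range.mp hcr
    have han : a < n := mem_range.mp (hRsub ha)
    have hac : a ≠ c := fun he => hcR (he ▸ ha)
    rcases lt_or_gt_of_ne hac with hlt | hgt
    · obtain ⟨i, hi1, hi2, hi3, hi4⟩ := exists_step_up R (c - a) a c le_rfl ha hcR hlt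
      exact hfound i (i + 1) hi3 hi4 (by omega) (Or.inl rfl)
    · obtain ⟨i, hi1, hi2, hi3, hi4⟩ := exists_step_down R (a - c) a c le_rfl ha hcR hgt
      exact hfound i (i - 1) hi3 hi4 (by omega) (Or.inr (by omega))
  -- case analysis on full and empty columns
  set Af := (range m).filter (fun j => h j = n) with hAf
  set Ae := (range m).filter (fun j => h j = 0) with hAe
  have hsumX : n * (n - 1) < 2 * ∑ j ∈ range m, h j := by rw [← hXcard]; exact h1
  have hsumX' : 2 * ∑ j ∈ range m, h j ≤ n * (n - 1) + 2 * n := by rw [← hXcard]; exact h2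
  have hnn : n * (n - 1) + n = n * n := by
    have hx : 1 ≤ n := by omega
    zify [hx]; ring
  have heven : ∃ q, n * (n - 1) = 2 * q := by
    rcases Nat.even_or_odd n with he | ho
    · obtain ⟨k, hk⟩ := he
      exact ⟨k * (n - 1), by rw [hk]; ring⟩
    · have : Even (n - 1) := Nat.Odd.sub_odd ho odd_one
      obtain ⟨k, hk⟩ := this
      exact ⟨n * k, by rw [hk]; ring⟩
  -- chain facts, as needed by profile_sum with b = 1
  have hr1 : ∀ j, j + 1 < m → h (j + 1) ≤ h j + bj (j + 1) := by
    intro j hj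
    have := hb_left (j + 1) (by omega) (by omega)
    simpa using this
  have hl1 : ∀ j, j + 1 < m → h j ≤ h (j + 1) + bj (j + 1 - 1) := by
    intro j hj
    simpa using hb_right j hj
  rcases Finset.eq_empty_or_nonempty Af with hAfe | hAfne <;>
    rcases Finset.eq_empty_or_nonempty Ae with hAee | hAene
  · -- no full, no empty: every column partial
    have hall : ∀ j ∈ range m, 1 ≤ bj j := by
      intro j hj
      have hj1 : h j ≠ n := by
        intro he
        have hx : j ∈ Af := by rw [hAf]; exact Finset.mem_filter.mpr ⟨hj, he⟩
        rw [hAfe] at hx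
        simp at hx
      have hj0 : h j ≠ 0 := by
        intro he
        have hx : j ∈ Ae := by rw [hAe]; exact Finset.mem_filter.mpr ⟨hj, he⟩
        rw [hAee] at hx
        simp at hx
      exact hb_mid j (mem_range.mp hj) (by omega) (by have := hhle j; omega)
    have : m ≤ ∑ j ∈ range m, bj j := by
      calc m = ∑ _j ∈ range m, 1 := by simp
        _ ≤ ∑ j ∈ range m, bj j := Finset.sum_le_sum hall
    omega
  · -- no full, some empty : case D
    have hP := profile_sum m 1 (le_refl 1) bj h Ae (Finset.filter_subset _ _) hAene
      (fun j hj => (Finset.mem_filter.mp hj).2)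
      (fun j hj => hr1 j hj) (fun j hj => hl1 j hj)
    set P := range m \ Ae with hPdef
    set W := P.card with hW
    -- every j in P is partial
    have hPpart : ∀ j ∈ P, 0 < h j ∧ h j < n := by
      intro j hj
      obtain ⟨hjr, hjA⟩ := Finset.mem_sdiff.mp hj
      constructor
      · rcases Nat.eq_zero_or_pos (h j) with h0 | h0
        · exact absurd (show j ∈ Ae by rw [hAe]; exact Finset.mem_filter.mpr ⟨hjr, h0⟩) hjA
        · exact h0
      · have hne : h j ≠ n := by
          intro he
          have hx : j ∈ Af := by rw [hAf]; exact Finset.mem_filter.mpr ⟨hjr, he⟩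
          rw [hAfe] at hx
          simp at hx
        have := hhle j
        omega
    -- sum over P equals total sum
    have hsumP : ∑ j ∈ P, h j = ∑ j ∈ range m, h j := by
      apply Finset.sum_subset (Finset.sdiff_subset)
      intro x hx hnx
      have hxA : x ∈ Ae := by
        by_contra hxa
        exact hnx (Finset.mem_sdiff.mpr ⟨hx, hxa⟩)
      exact (Finset.mem_filter.mp hxA).2
    -- E bound
    have hEb : (∑ j ∈ Ae, bj j) + (∑ j ∈ P, (bj j - 1)) + W ≤ ∑ j ∈ range m, bj j := by
      have hsplit : (∑ j ∈ P, bj j) + (∑ j ∈ Ae, bj j) = ∑ j ∈ range m, bj j :=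
        Finset.sum_sdiff (Finset.filter_subset _ _)
      have hge : (∑ j ∈ P, (bj j - 1)) + W ≤ ∑ j ∈ P, bj j := by
        have : ∑ j ∈ P, ((bj j - 1) + 1) ≤ ∑ j ∈ P, bj j := by
          apply Finset.sum_le_sum
          intro j hj
          have h0 := (hPpart j hj).1
          have h1' := (hPpart j hj).2
          have := hb_mid j (mem_range.mp (Finset.mem_sdiff.mp hj).1) h0 h1'
          omega
        rw [Finset.sum_add_distrib, Finset.sum_const, smul_eq_mul, mul_one] at this
        omega
      omega
    -- final arithmetic
    obtain ⟨q, hq⟩ := heven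
    set Q := (∑ j ∈ Ae, bj j) + (∑ j ∈ P, (bj j - 1)) + 1 with hQ
    have hQW : Q + W ≤ n := by omega
    have hA1 : n * n + 2 ≤ 2 * (∑ j ∈ P, h j) + n := by
      rw [hsumP]; omega
    have hA2 : 2 * (∑ j ∈ P, h j) + W ≤ 2 * (W * Q) + W * W := by
      have hWW : W * (W - 1) + W = W * W := by
        rcases Nat.eq_zero_or_pos W with h0 | h0
        · simp [h0]
        · have h1' : 1 ≤ W := h0
          zify [h1']; ring
      omega
    have c1 : ((n : ℤ) * n + 2) ≤ 2 * (∑ j ∈ P, h j : ℕ) + n := by exact_mod_cast hA1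
    have c2 : (2 * ((∑ j ∈ P, h j : ℕ) : ℤ) + W) ≤ 2 * (W * Q) + W * W := by exact_mod_cast hA2
    have c3 : ((Q : ℤ) + W) ≤ n := by exact_mod_cast hQW
    have c4 : (0 : ℤ) ≤ W := by positivity
    nlinarith [sq_nonneg ((n : ℤ) - W), sq_nonneg (2 * ((n : ℤ) - W) - 1),
      mul_nonneg c4 (sub_nonneg.mpr c3)]
  · -- some full, no empty : case 2b
    set g : ℕ → ℕ := fun j => n - h j with hg
    have hP := profile_sum m 0 (by omega) bj g Af (Finset.filter_subset _ _) hAfne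
      (fun j hj => by
        have := (Finset.mem_filter.mp hj).2
        simp only [hg]
        omega)
      (fun j hj => by
        have hx := hb_right j hj
        have hy := hhle j
        have hz := hhle (j + 1)
        simp only [hg, Nat.add_zero]
        omega)
      (fun j hj => by
        have hx := hr1 j hj
        have hy := hhle j
        have hz := hhle (j + 1)
        simp only [hg]
        show n - h j ≤ n - h (j + 1) + bj (j + 1 - 0)
        rw [Nat.sub_zero]
        omega)
    set P := range m \ Af with hPdef
    set W := P.card with hW
    set t := Af.card with ht
    have hPpart : ∀ j ∈ P, 0 < h j ∧ h j < n := by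
      intro j hj
      obtain ⟨hjr, hjA⟩ := Finset.mem_sdiff.mp hj
      constructor
      · rcases Nat.eq_zero_or_pos (h j) with h0 | h0
        · have hx : j ∈ Ae := by rw [hAe]; exact Finset.mem_filter.mpr ⟨hjr, h0⟩
          rw [hAee] at hx
          simp at hx
        · exact h0
      · have hne : h j ≠ n := fun he =>
          hjA (show j ∈ Af by rw [hAf]; exact Finset.mem_filter.mpr ⟨hjr, he⟩)
        have := hhle j
        omega
    have hgsum : (∑ j ∈ P, g j) + (∑ j ∈ P, h j) = W * n := by
      have : ∀ j ∈ P, g j + h j = n := by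
        intro j hj
        have := hhle j
        simp only [hg]
        omega
      calc (∑ j ∈ P, g j) + (∑ j ∈ P, h j) = ∑ j ∈ P, (g j + h j) :=
            (Finset.sum_add_distrib).symm
        _ = ∑ j ∈ P, n := Finset.sum_congr rfl this
        _ = W * n := by rw [Finset.sum_const, smul_eq_mul]
    have hsplitH : (∑ j ∈ P, h j) + (∑ j ∈ Af, h j) = ∑ j ∈ range m, h j :=
      Finset.sum_sdiff (Finset.filter_subset _ _)
    have hAfsum : ∑ j ∈ Af, h j = t * n := by
      calc ∑ j ∈ Af, h j = ∑ j ∈ Af, n :=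
            Finset.sum_congr rfl (fun j hj => (Finset.mem_filter.mp hj).2)
        _ = t * n := by rw [Finset.sum_const, smul_eq_mul]
    have hEb : (∑ j ∈ Af, bj j) + (∑ j ∈ P, (bj j - 1)) + W ≤ ∑ j ∈ range m, bj j := by
      have hsplit : (∑ j ∈ P, bj j) + (∑ j ∈ Af, bj j) = ∑ j ∈ range m, bj j :=
        Finset.sum_sdiff (Finset.filter_subset _ _)
      have hge : (∑ j ∈ P, (bj j - 1)) + W ≤ ∑ j ∈ P, bj j := by
        have : ∑ j ∈ P, ((bj j - 1) + 1) ≤ ∑ j ∈ P, bj j := by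
          apply Finset.sum_le_sum
          intro j hj
          have h0 := (hPpart j hj).1
          have h1' := (hPpart j hj).2
          have := hb_mid j (mem_range.mp (Finset.mem_sdiff.mp hj).1) h0 h1'
          omega
        rw [Finset.sum_add_distrib, Finset.sum_const, smul_eq_mul, mul_one] at this
        omega
      omega
    have hcardm : W + t = m := by
      have hx := Finset.card_sdiff_add_card_eq_card
        (Finset.filter_subset (fun j => h j = n) (range m))
      rw [Finset.card_range] at hx
      rw [hW, ht, hPdef, hAf]
      exact hx
    simp only [Nat.add_zero] at hP
    have hA2 : 2 * (∑ j ∈ P, g j) + W ≤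
        2 * (W * ((∑ j ∈ Af, bj j) + (∑ j ∈ P, (bj j - 1)))) + W * W := by
      have hWW : W * (W - 1) + W = W * W := by
        rcases Nat.eq_zero_or_pos W with h0 | h0
        · simp [h0]
        · have h1' : 1 ≤ W := h0
          zify [h1']; ring
      omega
    set Q := (∑ j ∈ Af, bj j) + (∑ j ∈ P, (bj j - 1)) with hQdef
    have hQW : Q + W + 1 ≤ n := by omega
    have hc6 : (∑ j ∈ P, h j) + t * n = ∑ j ∈ range m, h j := by
      rw [← hAfsum]; exact hsplitH
    have hc7 : 2 * (∑ j ∈ range m, h j) ≤ n * n + n := by omega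
    have c2 : 2 * ((∑ j ∈ P, g j : ℕ) : ℤ) + (W : ℤ) ≤ 2 * ((W : ℤ) * Q) + (W : ℤ) * W := by
      exact_mod_cast hA2
    have c5 : ((∑ j ∈ P, g j : ℕ) : ℤ) + ((∑ j ∈ P, h j : ℕ) : ℤ) = (W : ℤ) * n := by
      exact_mod_cast hgsum
    have c6 : ((∑ j ∈ P, h j : ℕ) : ℤ) + (t : ℤ) * n = ((∑ j ∈ range m, h j : ℕ) : ℤ) := by
      exact_mod_cast hc6
    have c7 : (2 : ℤ) * ((∑ j ∈ range m, h j : ℕ) : ℤ) ≤ (n : ℤ) * n + n := by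
      exact_mod_cast hc7
    have c8 : (Q : ℤ) + (W : ℤ) + 1 ≤ (n : ℤ) := by exact_mod_cast hQW
    have c9 : (W : ℤ) + (t : ℤ) = (m : ℤ) := by exact_mod_cast hcardm
    have c10 : ((n : ℤ)) ≤ (m : ℤ) := by exact_mod_cast hnm
    have c4 : (0 : ℤ) ≤ (W : ℤ) := by positivity
    have c4' : (0 : ℤ) ≤ (n : ℤ) := by positivity
    have chn : (2 : ℤ) ≤ (n : ℤ) := by exact_mod_cast hn
    have c9n : (W : ℤ) * n + (t : ℤ) * n = (m : ℤ) * n := by rw [← add_mul, c9]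
    nlinarith [sq_nonneg (2 * ((n : ℤ) - W) - 3),
      mul_nonneg c4 (by linarith : (0 : ℤ) ≤ (n : ℤ) - 1 - W - Q),
      mul_nonneg (sub_nonneg.mpr c10) c4']
  · -- both full and empty exist : case 1
    obtain ⟨j1, hj1⟩ := hAfne
    obtain ⟨j0, hj0⟩ := hAene
    obtain ⟨hj1r, hj1n⟩ := Finset.mem_filter.mp hj1
    obtain ⟨hj0r, hj0n⟩ := Finset.mem_filter.mp hj0
    have hj1m : j1 < m := mem_range.mp hj1r
    have hj0m : j0 < m := mem_range.mp hj0r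
    have hne : j1 ≠ j0 := by
      intro he
      rw [he] at hj1n
      omega
    rcases lt_or_gt_of_ne hne with hlt | hgt
    · have hchain := chain_down m 1 bj h hl1 j1 j0 (le_of_lt hlt) hj0m
      simp only [Nat.add_sub_cancel] at hchain
      have hsub : ∑ i ∈ Ico j1 j0, bj i ≤ ∑ j ∈ range m, bj j := by
        apply Finset.sum_le_sum_of_subset
        intro x hx
        have := Finset.mem_Ico.mp hx
        exact mem_range.mpr (by omega)
      omega
    · have hchain := chain_up m 1 bj h hr1 j0 j1 (le_of_lt hgt) hj1m
      rw [sum_shift bj 1 j0 j1 (le_of_lt hgt)] at hchain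
      have hsub : ∑ i ∈ Ico (j0 + 1) (j1 + 1), bj i ≤ ∑ j ∈ range m, bj j := by
        apply Finset.sum_le_sum_of_subset
        intro x hx
        have := Finset.mem_Ico.mp hx
        exact mem_range.mpr (by omega)
      omega

end IsoMain
section LB

open Finset

variable {n m : ℕ}

private lemma iso_set (hn : 2 ≤ n) (hnm : n ≤ m) (X : Set (Fin n × Fin m))
    (h1 : n * (n - 1) < 2 * X.ncard) (h2 : 2 * X.ncard ≤ n * (n - 1) + 2 * n) :
    n ≤ (boundary (gridGraph n m) X).ncard := by
  classical
  have hXf : X.Finite := Set.toFinite X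
  have hb : boundary (gridGraph n m) X = ↑(bnd hXf.toFinset) := by
    ext v
    simp only [boundary, bnd, Set.mem_setOf_eq, Finset.coe_filter, Set.Finite.mem_toFinset,
      Finset.mem_coe, Finset.mem_filter]
  have hcards : X.ncard = hXf.toFinset.card := Set.ncard_eq_toFinset_card X hXf
  rw [hb, Set.ncard_coe_finset]
  exact iso_main hn hnm _ (by omega) (by omega)

private lemma lb_lemma (hn : 2 ≤ n) (hnm : n ≤ m) :
    ¬ SuccessfulSearch (gridGraph n m) n := by
  classical
  rintro ⟨L, S, hcard, hfin⟩
  set G := gridGraph n m with hG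
  have hnn : n * (n - 1) + n = n * n := by
    have h2 : 1 ≤ n := by omega
    zify [h2]; ring
  have hmn : n * n ≤ n * m := Nat.mul_le_mul_left _ hnm
  have h2n : 2 * n ≤ n * n := Nat.mul_le_mul_right n hn
  have hsub : ∀ t, (FC G S (t + 1)) ∪ nbrSet G (FC G S (t + 1)) ⊆ FC G S t ∪ S (t + 1) := by
    intro t v hv
    rcases hv with hv | hv
    · simp only [FC] at hv; exact hv.1
    · obtain ⟨u, hu, hadj⟩ := hv
      simp only [FC] at hu
      obtain ⟨huPC, hubd⟩ := hu
      by_contra hvPC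
      exact hubd ⟨huPC, v, hvPC, hadj⟩
  have hstep : ∀ t, t + 1 ≤ L →
      (FC G S (t + 1)).ncard + (nbrSet G (FC G S (t + 1)) \ FC G S (t + 1)).ncard
        ≤ (FC G S t).ncard + n := by
    intro t ht
    have h1 : (FC G S (t + 1)) ∪ (nbrSet G (FC G S (t + 1)) \ FC G S (t + 1))
        ⊆ FC G S t ∪ S (t + 1) := by
      intro v hv
      rcases hv with hv | hv
      · exact hsub t (Or.inl hv)
      · exact hsub t (Or.inr hv.1)
    have h2 : ((FC G S (t + 1)) ∪ (nbrSet G (FC G S (t + 1)) \ FC G S (t + 1))).ncard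
        = (FC G S (t + 1)).ncard + (nbrSet G (FC G S (t + 1)) \ FC G S (t + 1)).ncard :=
      Set.ncard_union_eq disjoint_sdiff_self_right
    calc (FC G S (t + 1)).ncard + (nbrSet G (FC G S (t + 1)) \ FC G S (t + 1)).ncard
        = ((FC G S (t + 1)) ∪ (nbrSet G (FC G S (t + 1)) \ FC G S (t + 1))).ncard := h2.symm
      _ ≤ (FC G S t ∪ S (t + 1)).ncard := Set.ncard_le_ncard h1
      _ ≤ (FC G S t).ncard + (S (t + 1)).ncard := Set.ncard_union_le _ _
      _ ≤ (FC G S t).ncard + n := by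
          have := hcard (t + 1) (by omega) ht; omega
  have hbd : ∀ K : Set (Fin n × Fin m), nbrSet G K \ K = boundary G Kᶜ := by
    intro K
    ext v
    simp only [nbrSet, boundary, Set.mem_diff, Set.mem_setOf_eq, Set.mem_compl_iff, not_not]
    constructor
    · rintro ⟨⟨u, hu, hadj⟩, hv⟩
      exact ⟨hv, u, by simpa using hu, hadj.symm⟩
    · rintro ⟨hv, w, hw, hadj⟩
      exact ⟨⟨w, by simpa using hw, hadj.symm⟩, hv⟩
  have hcardV : Nat.card (Fin n × Fin m) = n * m := by
    simp [Nat.card_eq_fintype_card]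
  have main : ∀ t, t ≤ L → 2 * (FC G S t).ncard + n * n + n + 1 ≤ 2 * (n * m) := by
    intro t
    induction t with
    | zero =>
      intro _
      simp only [FC, Set.ncard_empty]
      omega
    | succ t ih =>
      intro ht
      have iht := ih (by omega)
      have hstept := hstep t ht
      by_contra hcon
      push_neg at hcon
      have hcu : (FC G S (t + 1)).ncard ≤ n * m := by
        have h3 : (FC G S (t + 1)).ncard ≤ (Set.univ : Set (Fin n × Fin m)).ncard :=
          Set.ncard_le_ncard (Set.subset_univ _)
        rwa [Set.ncard_univ, hcardV] at h3
      have hcompl : (FC G S (t + 1))ᶜ.ncard = n * m - (FC G S (t + 1)).ncard := by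
        have h4 := Set.ncard_add_ncard_compl (FC G S (t + 1))
        rw [hcardV] at h4
        omega
      have hb1 : n * (n - 1) < 2 * (FC G S (t + 1))ᶜ.ncard := by
        rw [hcompl]; omega
      have hb2 : 2 * (FC G S (t + 1))ᶜ.ncard ≤ n * (n - 1) + 2 * n := by
        rw [hcompl]; omega
      have hiso := iso_set hn hnm (FC G S (t + 1))ᶜ hb1 hb2
      rw [← hbd] at hiso
      omega
  have hfinal := main L (le_refl L)
  rw [hfin, Set.ncard_univ, hcardV] at hfinal
  omega

end LB
section Assemble

variable {n m : ℕ}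

private lemma FC_map {α β : Type*} (G : SimpleGraph α) (H : SimpleGraph β) (e : α ≃ β)
    (he : ∀ v w, H.Adj (e v) (e w) ↔ G.Adj v w) (S : ℕ → Set α) (t : ℕ) :
    FC H (fun i => e '' S i) t = e '' FC G S t := by
  have hbd : ∀ P : Set α, boundary H (e '' P) = e '' boundary G P := by
    intro P
    ext y
    constructor
    · rintro ⟨⟨v, hv, rfl⟩, w, hw, hadj⟩
      refine ⟨v, ⟨hv, e.symm w, ?_, ?_⟩, rfl⟩
      · intro hc; exact hw ⟨e.symm w, hc, by simp⟩
      · rw [← he]; simpa using hadj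
    · rintro ⟨v, ⟨hv, w, hw, hadj⟩, rfl⟩
      refine ⟨⟨v, hv, rfl⟩, e w, ?_, (he _ _).mpr hadj⟩
      rintro ⟨u, hu, huw⟩
      exact hw (by rwa [← e.injective huw])
  induction t with
  | zero => simp [FC]
  | succ t ih =>
    simp only [FC]
    rw [ih, ← Set.image_union, hbd, ← Set.image_diff e.injective]

private lemma SS_map {α β : Type*} (G : SimpleGraph α) (H : SimpleGraph β) (e : α ≃ β)
    (he : ∀ v w, H.Adj (e v) (e w) ↔ G.Adj v w) (k : ℕ) :
    SuccessfulSearch G k → SuccessfulSearch H k := by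
  rintro ⟨L, S, h1, h2⟩
  refine ⟨L, fun t => e '' S t, ?_, ?_⟩
  · intro t ht1 ht2
    rw [Set.ncard_image_of_injective _ e.injective]
    exact h1 t ht1 ht2
  · rw [FC_map G H e he S L, h2, Set.image_univ, Equiv.range_eq_univ]

private lemma grid_swap_adj (v w : Fin n × Fin m) :
    (gridGraph m n).Adj (Equiv.prodComm (Fin n) (Fin m) v) (Equiv.prodComm (Fin n) (Fin m) w)
      ↔ (gridGraph n m).Adj v w := by
  show |((v.2 : ℕ) : ℤ) - ((w.2 : ℕ) : ℤ)| + |((v.1 : ℕ) : ℤ) - ((w.1 : ℕ) : ℤ)| = 1 ↔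
    |((v.1 : ℕ) : ℤ) - ((w.1 : ℕ) : ℤ)| + |((v.2 : ℕ) : ℤ) - ((w.2 : ℕ) : ℤ)| = 1
  constructor <;> intro h <;> rwa [add_comm]

private lemma SS_grid_swap (k : ℕ) :
    SuccessfulSearch (gridGraph n m) k ↔ SuccessfulSearch (gridGraph m n) k :=
  ⟨SS_map _ _ (Equiv.prodComm (Fin n) (Fin m)) grid_swap_adj k,
   SS_map _ _ (Equiv.prodComm (Fin m) (Fin n)) grid_swap_adj k⟩

private lemma main_le (n m : ℕ) (hn : 2 ≤ n) (hm : 2 ≤ m) (hnm : n ≤ m) :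
    inspectionNumber (gridGraph n m) = n + 1 := by
  have hub := ub_lemma (show 1 ≤ n by omega) hm
  have hlb := lb_lemma hn hnm
  have hmem : (n + 1) ∈ {k | SuccessfulSearch (gridGraph n m) k} := hub
  show sInf {k | SuccessfulSearch (gridGraph n m) k} = n + 1
  apply le_antisymm
  · exact Nat.sInf_le hmem
  · apply le_csInf ⟨n + 1, hmem⟩
    intro k hk
    by_contra hc
    push_neg at hc
    apply hlb
    obtain ⟨L, S, h1, h2⟩ := hk
    exact ⟨L, S, fun t ht1 ht2 => le_trans (h1 t ht1 ht2) (by omega), h2⟩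

end Assemble
/-- For all `n, m ≥ 2`, the inspection number of the `n × m` grid graph
equals `min n m + 1`. -/
theorem inspectionNumber_gridGraph (n m : ℕ) (hn : 2 ≤ n) (hm : 2 ≤ m) :
    inspectionNumber (gridGraph n m) = min n m + 1 := by
  rcases le_total n m with h | h
  · rw [min_eq_left h]; exact main_le n m hn hm h
  · rw [min_eq_right h]
    have heq : inspectionNumber (gridGraph n m) = inspectionNumber (gridGraph m n) := by
      unfold inspectionNumber
      congr 1
      ext k
      exact SS_grid_swap k
    rw [heq]; exact main_le m n hm hn h

end Inspection
end

section
/- For every connected finite simple graph G, the monotonic inspection number satisfies in_m(G) = pw(G) + 1, where pw(G) denotes the pathwidth of G. -/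
open SimpleGraph


namespace Inspection

variable {V : Type*} {W : Type*}

section Aux

variable {V : Type} [Fintype V]

/-- The union of the bags `X 1, ..., X t`. -/
def Ubags (X : ℕ → Set V) (t : ℕ) : Set V := {v | ∃ i, 1 ≤ i ∧ i ≤ t ∧ v ∈ X i}

lemma Ubags_zero (X : ℕ → Set V) : Ubags X 0 = ∅ := by
  ext v
  simp only [Ubags, Set.mem_setOf_eq, Set.mem_empty_iff_false, iff_false, not_exists]
  intro i h
  omega

lemma Ubags_succ (X : ℕ → Set V) (t : ℕ) : Ubags X (t + 1) = Ubags X t ∪ X (t + 1) := by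
  ext v
  constructor
  · rintro ⟨i, h1, h2, hv⟩
    rcases eq_or_lt_of_le h2 with rfl | h
    · exact Or.inr hv
    · exact Or.inl ⟨i, h1, by omega, hv⟩
  · rintro (⟨i, h1, h2, hv⟩ | hv)
    · exact ⟨i, h1, by omega, hv⟩
    · exact ⟨t + 1, by omega, le_rfl, hv⟩

lemma Ubags_mono (X : ℕ → Set V) {s t : ℕ} (h : s ≤ t) : Ubags X s ⊆ Ubags X t := by
  rintro v ⟨i, h1, h2, hv⟩
  exact ⟨i, h1, h2.trans h, hv⟩

lemma boundary_univ (G : SimpleGraph V) : boundary G (Set.univ : Set V) = ∅ := by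
  ext v
  simp [boundary]

lemma bd_sub (G : SimpleGraph V) {X : ℕ → Set V} {ℓ : ℕ} (hX : IsPathDecomp G ℓ X) (t : ℕ) :
    boundary G (Ubags X t) ⊆ X (t + 1) := by
  rintro v ⟨⟨i, h1, h2, hvi⟩, w, hw, hadj⟩
  obtain ⟨j, hj1, hjℓ, hvj, hwj⟩ := hX.1 v w hadj
  have hjt : t + 1 ≤ j := by
    by_contra h
    exact hw ⟨j, hj1, by omega, hwj⟩
  exact hX.2 i (t + 1) j h1 (by omega) hjt hjℓ ⟨hvi, hvj⟩

lemma FC_eq (G : SimpleGraph V) {X : ℕ → Set V} {ℓ : ℕ} (hX : IsPathDecomp G ℓ X) (t : ℕ) :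
    FC G X t = Ubags X t \ boundary G (Ubags X t) := by
  induction t with
  | zero =>
    rw [Ubags_zero, Set.empty_diff]
    rfl
  | succ t ih =>
    have hPC : FC G X t ∪ X (t + 1) = Ubags X (t + 1) := by
      rw [ih, Ubags_succ]
      apply Set.Subset.antisymm
      · exact Set.union_subset_union_left _ Set.diff_subset
      · rintro v (hv | hv)
        · by_cases hb : v ∈ boundary G (Ubags X t)
          · exact Or.inr (bd_sub G hX t hb)
          · exact Or.inl ⟨hv, hb⟩
        · exact Or.inr hv
    show (FC G X t ∪ X (t + 1)) \ boundary G (FC G X t ∪ X (t + 1)) = _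
    rw [hPC]

lemma FC_decomp_mono (G : SimpleGraph V) {X : ℕ → Set V} {ℓ : ℕ} (hX : IsPathDecomp G ℓ X)
    {s t : ℕ} (h : s ≤ t) : FC G X s ⊆ FC G X t := by
  rw [FC_eq G hX, FC_eq G hX]
  rintro v ⟨hv, hb⟩
  refine ⟨Ubags_mono X h hv, ?_⟩
  rintro ⟨hvU, w, hw, hadj⟩
  exact hb ⟨hv, w, fun hwi => hw (Ubags_mono X h hwi), hadj⟩

lemma sms_of_decomp (G : SimpleGraph V) (hG : G.Connected) {w ℓ : ℕ} {X : ℕ → Set V}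
    (hX : IsPathDecomp G ℓ X) (hsize : ∀ i, 1 ≤ i → i ≤ ℓ → (X i).ncard ≤ w + 1)
    (hE : ∃ a b, G.Adj a b) :
    SuccessfulMonotonicSearch G (w + 1) := by
  refine ⟨ℓ, X, hsize, fun i j hij _ => FC_decomp_mono G hX hij, ?_⟩
  have hcov : ∀ v : V, ∃ i, 1 ≤ i ∧ i ≤ ℓ ∧ v ∈ X i := by
    intro v
    obtain ⟨a, b, hab⟩ := hE
    have hnb : ∃ u, G.Adj v u := by
      by_cases hva : v = a
      · exact ⟨b, hva ▸ hab⟩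
      · obtain ⟨p⟩ := hG.preconnected v a
        cases p with
        | nil => exact absurd rfl hva
        | cons h _ => exact ⟨_, h⟩
    obtain ⟨u, hu⟩ := hnb
    obtain ⟨i, h1, h2, hv, _⟩ := hX.1 v u hu
    exact ⟨i, h1, h2, hv⟩
  have hU : Ubags X ℓ = Set.univ := Set.eq_univ_of_forall (fun v => hcov v)
  rw [FC_eq G hX, hU, boundary_univ, Set.diff_empty]

lemma pw_succ_le_of_sms (G : SimpleGraph V) (hG : G.Connected) {k : ℕ}
    (h : SuccessfulMonotonicSearch G k) : pathwidth G + 1 ≤ k := by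
  classical
  obtain ⟨ℓ, S, hsize, hmono, hfin⟩ := h
  have hne : (Set.univ : Set V).Nonempty := by
    obtain ⟨v⟩ := hG.nonempty
    exact ⟨v, trivial⟩
  have hk1 : 1 ≤ k := by
    by_contra hk
    have hk0 : k = 0 := by omega
    have hempty : ∀ t, t ≤ ℓ → FC G S t = ∅ := by
      intro t
      induction t with
      | zero => intro _; rfl
      | succ t ih =>
        intro ht
        have hS : S (t + 1) = ∅ := by
          have h1 := hsize (t + 1) (by omega) ht
          rw [hk0] at h1
          exact ((Set.ncard_eq_zero (Set.toFinite _)).mp (Nat.le_zero.mp h1))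
        show (FC G S t ∪ S (t + 1)) \ boundary G (FC G S t ∪ S (t + 1)) = ∅
        rw [ih (by omega), hS]
        simp
    have h0 := hempty ℓ le_rfl
    rw [hfin] at h0
    exact hne.ne_empty h0
  have hFCsub : ∀ s, FC G S (s + 1) ⊆ FC G S s ∪ S (s + 1) := fun s => Set.diff_subset
  have hfront : ∀ s, s + 1 ≤ ℓ → ∀ w x, x ∈ FC G S (s + 1) → w ∉ FC G S (s + 1) →
      G.Adj x w → w ∈ S (s + 1) := by
    intro s hs w x hx hw hadj
    have hxd : x ∈ (FC G S s ∪ S (s + 1)) \ boundary G (FC G S s ∪ S (s + 1)) := hx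
    have hwPC : w ∈ FC G S s ∪ S (s + 1) := by
      by_contra hwn
      exact hxd.2 ⟨hxd.1, w, hwn, hadj⟩
    rcases hwPC with hw' | hw'
    · exact absurd (hmono s (s + 1) (by omega) hs hw') hw
    · exact hw'
  set B : ℕ → Set V := fun t =>
    (FC G S t \ FC G S (t - 1)) ∪ {w | w ∉ FC G S t ∧ ∃ x ∈ FC G S t, G.Adj x w} with hB
  have hBsub : ∀ t, 1 ≤ t → t ≤ ℓ → B t ⊆ S t := by
    intro t h1 h2 v hv
    obtain ⟨s, rfl⟩ : ∃ s, t = s + 1 := ⟨t - 1, by omega⟩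
    rcases hv with ⟨hv1, hv2⟩ | ⟨hv1, x, hx, hadj⟩
    · have h3 := hFCsub s hv1
      simp only [Nat.add_sub_cancel] at hv2
      rcases h3 with h | h
      · exact absurd h hv2
      · exact h
    · exact hfront s h2 v x hx hv1 hadj
  have hcov : ∀ u v : V, G.Adj u v → ∃ i, 1 ≤ i ∧ i ≤ ℓ ∧ u ∈ B i ∧ v ∈ B i := by
    intro u v hadj
    have hPl : u ∈ FC G S ℓ ∨ v ∈ FC G S ℓ := by
      rw [hfin]; exact Or.inl trivial
    have hex : ∃ t, u ∈ FC G S t ∨ v ∈ FC G S t := ⟨ℓ, hPl⟩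
    set t := Nat.find hex with ht
    have hspec := Nat.find_spec hex
    have ht1 : 1 ≤ t := by
      rcases Nat.eq_zero_or_pos t with h0 | h
      · exfalso
        rw [← ht, h0] at hspec
        rcases hspec with h | h <;> exact h
      · exact h
    have htl : t ≤ ℓ := Nat.find_min' hex hPl
    have hnot : ¬(u ∈ FC G S (t - 1) ∨ v ∈ FC G S (t - 1)) :=
      Nat.find_min hex (by omega)
    push_neg at hnot
    obtain ⟨hu1, hv1⟩ := hnot
    have key : ∀ a b : V, G.Adj a b → a ∈ FC G S t → a ∉ FC G S (t - 1) →
        b ∉ FC G S (t - 1) → a ∈ B t ∧ b ∈ B t := by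
      intro a b hab ha ha1 hb1
      refine ⟨Or.inl ⟨ha, ha1⟩, ?_⟩
      by_cases hb : b ∈ FC G S t
      · exact Or.inl ⟨hb, hb1⟩
      · exact Or.inr ⟨hb, a, ha, hab⟩
    rcases hspec with h | h
    · obtain ⟨h1, h2⟩ := key u v hadj h hu1 hv1
      exact ⟨t, ht1, htl, h1, h2⟩
    · obtain ⟨h1, h2⟩ := key v u hadj.symm h hv1 hu1
      exact ⟨t, ht1, htl, h2, h1⟩
  have hint : ∀ i j k', 1 ≤ i → i ≤ j → j ≤ k' → k' ≤ ℓ → B i ∩ B k' ⊆ B j := by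
    intro i j k' h1 hij hjk hkl v hv
    obtain ⟨hvi, hvk⟩ := hv
    have hvk1 : v ∉ FC G S (k' - 1) := by
      rcases hvk with ⟨_, h⟩ | ⟨h, _⟩
      · exact h
      · intro hc
        exact h (hmono (k' - 1) k' (by omega) hkl hc)
    by_cases hik : i = k'
    · have hjk' : j = k' := by omega
      subst hjk'
      exact hvk
    · have hik' : i ≤ k' - 1 := by omega
      have hvFi : v ∉ FC G S i := fun hc => hvk1 (hmono i (k' - 1) hik' (by omega) hc)
      rcases hvi with ⟨hc, _⟩ | ⟨_, x, hxi, hadj⟩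
      · exact absurd hc hvFi
      · have hxj : x ∈ FC G S j := hmono i j hij (by omega) hxi
        by_cases hvj : v ∈ FC G S j
        · refine Or.inl ⟨hvj, ?_⟩
          intro hc
          exact hvk1 (hmono (j - 1) (k' - 1) (by omega) (by omega) hc)
        · exact Or.inr ⟨hvj, x, hxj, hadj⟩
  have hpw : pathwidth G ≤ k - 1 := by
    apply Nat.sInf_le
    refine ⟨ℓ, B, ⟨hcov, hint⟩, ?_⟩
    intro i h1 h2
    calc (B i).ncard ≤ (S i).ncard := Set.ncard_le_ncard (hBsub i h1 h2) (Set.toFinite _)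
      _ ≤ k := hsize i h1 h2
      _ = k - 1 + 1 := by omega
  omega

end Aux

/-- For every connected finite simple graph `G`, the monotonic inspection
number equals the pathwidth plus one. -/
theorem monoInspectionNumber_eq_pathwidth {V : Type} [Fintype V] (G : SimpleGraph V)
    (hG : G.Connected) :
    monoInspectionNumber G = pathwidth G + 1 := by
  have hMne : SuccessfulMonotonicSearch G (pathwidth G + 1) := by
    by_cases hE : ∃ a b, G.Adj a b
    · have hpne : {w | ∃ (ℓ : ℕ) (X : ℕ → Set V), IsPathDecomp G ℓ X ∧
          ∀ i, 1 ≤ i → i ≤ ℓ → (X i).ncard ≤ w + 1}.Nonempty := by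
        refine ⟨Fintype.card V - 1, 1, fun _ => Set.univ, ⟨?_, ?_⟩, ?_⟩
        · intro u v _
          exact ⟨1, le_rfl, le_rfl, trivial, trivial⟩
        · intro i j k _ _ _ _ v _
          trivial
        · intro i _ _
          rw [Set.ncard_univ, Nat.card_eq_fintype_card]
          have h1 : 1 ≤ Fintype.card V := Fintype.card_pos_iff.mpr hG.nonempty
          omega
      have hmem : pathwidth G ∈ {w | ∃ (ℓ : ℕ) (X : ℕ → Set V), IsPathDecomp G ℓ X ∧
          ∀ i, 1 ≤ i → i ≤ ℓ → (X i).ncard ≤ w + 1} := Nat.sInf_mem hpne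
      obtain ⟨ℓ, X, hX, hsize⟩ := hmem
      exact sms_of_decomp G hG hX hsize hE
    · push_neg at hE
      have hsub : ∀ a b : V, a = b := by
        intro a b
        by_contra hab
        obtain ⟨p⟩ := hG.preconnected a b
        cases p with
        | nil => exact hab rfl
        | cons h _ => exact hE _ _ h
      obtain ⟨v⟩ := hG.nonempty
      refine ⟨1, fun _ => Set.univ, ?_, ?_, ?_⟩
      · intro t _ _
        have huniv : (Set.univ : Set V) = {v} := by
          ext w
          simp [hsub w v]
        rw [huniv, Set.ncard_singleton]
        omega
      · intro i j hij hj1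
        rcases eq_or_lt_of_le hij with rfl | h
        · exact subset_rfl
        · have hi0 : i = 0 := by omega
          subst hi0
          exact Set.empty_subset _
      · show ((∅ : Set V) ∪ Set.univ) \ boundary G ((∅ : Set V) ∪ Set.univ) = Set.univ
        rw [Set.empty_union, boundary_univ, Set.diff_empty]
  have hle : monoInspectionNumber G ≤ pathwidth G + 1 := Nat.sInf_le hMne
  have hge : pathwidth G + 1 ≤ monoInspectionNumber G := by
    have hmem : monoInspectionNumber G ∈ {k | SuccessfulMonotonicSearch G k} :=
      Nat.sInf_mem ⟨_, hMne⟩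
    exact pw_succ_le_of_sms G hG hmem
  omega

end Inspection
end

section
/- For every connected finite simple graph G, in(G) ≤ pw(G) + 1, where pw(G) denotes the pathwidth of G. -/
open SimpleGraph


namespace Inspection

variable {V : Type*} {W : Type*}

/-- For every connected finite simple graph `G`, `in(G) ≤ pw(G) + 1`. -/
theorem inspectionNumber_le_pathwidth {V : Type} [Fintype V] (G : SimpleGraph V)
    (hG : G.Connected) :
    inspectionNumber G ≤ pathwidth G + 1 := by
  classical
  -- The defining set of pathwidth is nonempty (take the single bag `univ`).
  have hne : {w | ∃ (ℓ : ℕ) (X : ℕ → Set V), IsPathDecomp G ℓ X ∧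
      ∀ i, 1 ≤ i → i ≤ ℓ → (X i).ncard ≤ w + 1}.Nonempty := by
    refine ⟨Nat.card V, 1, fun _ => Set.univ, ⟨?_, ?_⟩, ?_⟩
    · intro u v _; exact ⟨1, le_refl 1, le_refl 1, trivial, trivial⟩
    · intro i j k _ _ _ _ x _; trivial
    · intro i _ _; rw [Set.ncard_univ]; exact Nat.le_succ _
  have hmem := Nat.sInf_mem hne
  obtain ⟨ℓ, X, ⟨hcov, hint⟩, hbag⟩ := hmem
  apply Nat.sInf_le
  show SuccessfulSearch G (pathwidth G + 1)
  by_cases hall : ∀ v : V, ∃ i, 1 ≤ i ∧ i ≤ ℓ ∧ v ∈ X i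
  · -- Every vertex is in some bag; search with the bags themselves.
    have key : ∀ t, {v | (∃ i, 1 ≤ i ∧ i ≤ t ∧ v ∈ X i) ∧
        ∀ j, t < j → j ≤ ℓ → v ∉ X j} ⊆ FC G X t := by
      intro t
      induction t with
      | zero => rintro v ⟨⟨i, h1, h2, _⟩, _⟩; omega
      | succ t ih =>
        rintro v ⟨⟨i, h1, h2, hvi⟩, hvlate⟩
        have hvPC : v ∈ FC G X t ∪ X (t + 1) := by
          rcases Nat.lt_or_ge i (t + 1) with hi | hi
          · by_cases hvt : ∀ j, t < j → j ≤ ℓ → v ∉ X j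
            · exact Or.inl (ih ⟨⟨i, h1, by omega, hvi⟩, hvt⟩)
            · push_neg at hvt
              obtain ⟨j, hj1, hj2, hvj⟩ := hvt
              have : j = t + 1 := by
                by_contra h
                exact hvlate j (by omega) hj2 hvj
              exact Or.inr (this ▸ hvj)
          · have : i = t + 1 := by omega
            exact Or.inr (this ▸ hvi)
        refine ⟨hvPC, ?_⟩
        rintro ⟨-, u, huPC, hadj⟩
        obtain ⟨m, hm1, hm2, hvm, hum⟩ := hcov v u hadj
        have hmle : m ≤ t + 1 := by
          by_contra h
          exact hvlate m (by omega) hm2 hvm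
        have huX : u ∉ X (t + 1) := fun h => huPC (Or.inr h)
        have hmle' : m ≤ t := by
          rcases Nat.lt_or_ge m (t + 1) with h | h
          · omega
          · exact absurd ((by omega : m = t + 1) ▸ hum) huX
        have huFC : u ∉ FC G X t := fun h => huPC (Or.inl h)
        have : ¬ ∀ j, t < j → j ≤ ℓ → u ∉ X j := by
          intro h
          exact huFC (ih ⟨⟨m, hm1, hmle', hum⟩, h⟩)
        push_neg at this
        obtain ⟨j, hj1, hj2, huj⟩ := this
        have hj3 : t + 1 ≤ j := by omega
        exact huX (hint m (t + 1) j hm1 (by omega) hj3 hj2 ⟨hum, huj⟩)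
    refine ⟨ℓ, X, fun t h1 h2 => hbag t h1 h2, ?_⟩
    apply Set.eq_univ_of_forall
    intro v
    apply key ℓ
    refine ⟨hall v, fun j hj1 hj2 _ => by omega⟩
  · -- Some vertex is in no bag: it is isolated, so `V` is a singleton.
    push_neg at hall
    obtain ⟨v, hv⟩ := hall
    have hiso : ∀ u, ¬ G.Adj v u := by
      intro u hadj
      obtain ⟨i, h1, h2, hvi, _⟩ := hcov v u hadj
      exact hv i h1 h2 hvi
    have huniq : ∀ u : V, u = v := by
      intro u
      obtain ⟨p⟩ := (hG.preconnected v u)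
      cases p with
      | nil => rfl
      | cons h _ => exact absurd h (hiso _)
    refine ⟨1, fun _ => {v}, ?_, ?_⟩
    · intro t _ _
      rw [Set.ncard_singleton]
      exact Nat.succ_le_succ (Nat.zero_le _)
    · apply Set.eq_univ_of_forall
      intro u
      rw [huniq u]
      show v ∈ FC G _ 1
      refine ⟨Or.inr rfl, ?_⟩
      rintro ⟨-, w, -, hadj⟩
      exact hiso w hadj

end Inspection
end
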